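/- Let K be a non-archimedean valued field and x_0, r > 0 with corresponding seminorm α(x,r) on K² defined by α(x,r)(a,b) = sup over y ∈ B(x,r) of |a - b·y|. Then α(x,r)(a,b) = max(|a - b·x|, |b|·r); that is, α(x,r) is the diagonalizable seminorm with respect to the basis v₀=(1,0), v₁=(x,1), taking values ρ₀=1 on v₀ and ρ₁=r on v₁. -/
import Mathlib

lemma dense_norms {C : Type*} [NormedField C] [IsAlgClosed C]
    {θ : C} (hθ : 1 < ‖θ‖) {t s : ℝ} (ht : 0 < t) (hts : t < s) :
    ∃ c : C, t < ‖c‖ ∧ ‖c‖ < s := by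
  have hθ0 : (0:ℝ) < ‖θ‖ := lt_trans one_pos hθ
  have hlogθ : 0 < Real.log ‖θ‖ := Real.log_pos hθ
  obtain ⟨q, hq1, hq2⟩ := exists_rat_btwn
    (div_lt_div_of_pos_right (Real.log_lt_log ht hts) hlogθ)
  set n : ℕ := q.den with hn
  have hnpos : 0 < n := q.pos
  obtain ⟨c, hc⟩ := IsAlgClosed.exists_pow_nat_eq (θ ^ (q.num : ℤ)) hnpos
  refine ⟨c, ?_, ?_⟩
  · have key : t ^ n < ‖c‖ ^ n := by
      have h1 : ‖c‖ ^ n = ‖θ‖ ^ (q.num : ℤ) := by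
        rw [← norm_pow, hc, norm_zpow]
      rw [h1]
      rw [← Real.log_lt_log_iff (pow_pos ht n) (zpow_pos hθ0 _)]
      rw [Real.log_pow, Real.log_zpow]
      have : (n : ℝ) * (Real.log t / Real.log ‖θ‖) < (n:ℝ) * q := by
        exact mul_lt_mul_of_pos_left hq1 (by exact_mod_cast hnpos)
      have hqd : (n : ℝ) * q = (q.num : ℝ) := by
        rw [hn]
        rw [Rat.cast_def]
        field_simp
      rw [hqd] at this
      calc (n:ℝ) * Real.log t = ((n:ℝ) * (Real.log t / Real.log ‖θ‖)) * Real.log ‖θ‖ := by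
            field_simp
        _ < (q.num : ℝ) * Real.log ‖θ‖ := by
            exact mul_lt_mul_of_pos_right this hlogθ
    exact lt_of_pow_lt_pow_left₀ n (norm_nonneg c) key
  · have key : ‖c‖ ^ n < s ^ n := by
      have h1 : ‖c‖ ^ n = ‖θ‖ ^ (q.num : ℤ) := by
        rw [← norm_pow, hc, norm_zpow]
      rw [h1]
      have hs : 0 < s := ht.trans hts
      rw [← Real.log_lt_log_iff (zpow_pos hθ0 _) (pow_pos hs n)]
      rw [Real.log_pow, Real.log_zpow]
      have : (n:ℝ) * q < (n : ℝ) * (Real.log s / Real.log ‖θ‖) := by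
        exact mul_lt_mul_of_pos_left hq2 (by exact_mod_cast hnpos)
      have hqd : (n : ℝ) * q = (q.num : ℝ) := by
        rw [hn, Rat.cast_def]; field_simp
      rw [hqd] at this
      calc (q.num : ℝ) * Real.log ‖θ‖ < ((n:ℝ) * (Real.log s / Real.log ‖θ‖)) * Real.log ‖θ‖ :=
            mul_lt_mul_of_pos_right this hlogθ
        _ = (n:ℝ) * Real.log s := by field_simp
    exact lt_of_pow_lt_pow_left₀ n (le_of_lt (ht.trans hts)) key

lemma ultra_sub_le {C : Type*} [NormedField C] [IsUltrametricDist C] (u v : C) :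
    ‖u - v‖ ≤ max ‖u‖ ‖v‖ := by
  rw [sub_eq_add_neg]
  simpa using IsUltrametricDist.norm_add_le_max u (-v)

lemma ultra_sub_eq {C : Type*} [NormedField C] [IsUltrametricDist C] {u v : C} (h : ‖u‖ ≠ ‖v‖) :
    ‖u - v‖ = max ‖u‖ ‖v‖ := by
  rw [sub_eq_add_neg, IsUltrametricDist.norm_add_eq_max_of_norm_ne_norm (by simpa using h),
    norm_neg]

/-- The seminorm `α(x,r)` on `K²`, given on `(a,b)` by the supremum of `‖a - b·y‖` over the
closed ball `B(x,r)` (taken in a complete algebraically closed non-archimedean extension `C`),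
equals the diagonalizable seminorm `max ‖a - b·x‖ (‖b‖·r)` with respect to the basis
`v₀ = (1,0)`, `v₁ = (x,1)` with values `ρ₀ = 1`, `ρ₁ = r`. -/
theorem stmt1 (K C : Type*) [NormedField K] [NormedField C]
    [CompleteSpace K] [CompleteSpace C] [IsUltrametricDist K] [IsUltrametricDist C]
    [IsAlgClosed C] [Algebra K C]
    (hext : ∀ a : K, ‖algebraMap K C a‖ = ‖a‖)
    (hnt : ∃ a : K, a ≠ 0 ∧ ‖a‖ ≠ 1)
    (x : K) (r : ℝ) (hr : 0 < r) (a b : K) :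
    sSup {d : ℝ | ∃ y ∈ Metric.closedBall (algebraMap K C x) r,
        d = ‖algebraMap K C a - algebraMap K C b * y‖} = max ‖a - b * x‖ (‖b‖ * r) := by
  set φ := algebraMap K C
  set S : Set ℝ := {d : ℝ | ∃ y ∈ Metric.closedBall (φ x) r, d = ‖φ a - φ b * y‖}
  have hAB : ‖φ a - φ b * φ x‖ = ‖a - b * x‖ := by
    rw [← map_mul, ← map_sub, hext]
  have hmem0 : ‖a - b * x‖ ∈ S := by
    refine ⟨φ x, Metric.mem_closedBall_self hr.le, hAB.symm⟩
  have hub : ∀ d ∈ S, d ≤ max ‖a - b * x‖ (‖b‖ * r) := by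
    rintro d ⟨y, hy, rfl⟩
    have : φ a - φ b * y = (φ a - φ b * φ x) - φ b * (y - φ x) := by ring
    rw [this]
    refine (ultra_sub_le _ _).trans (max_le_max (le_of_eq hAB) ?_)
    rw [norm_mul, hext]
    exact mul_le_mul_of_nonneg_left (by rwa [← dist_eq_norm]) (norm_nonneg b)
  have hbdd : BddAbove S := ⟨_, hub⟩
  have hne : S.Nonempty := ⟨_, hmem0⟩
  refine le_antisymm (csSup_le hne hub) (max_le (le_csSup hbdd hmem0) ?_)
  -- ‖b‖ * r ≤ sSup S
  rcases eq_or_ne b 0 with rfl | hb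
  · simpa using (norm_nonneg (a - 0 * x)).trans (le_csSup hbdd hmem0)
  have hb0 : (0:ℝ) < ‖b‖ := norm_pos_iff.mpr hb
  -- an element of C of norm > 1
  obtain ⟨w, hw0, hw1⟩ := hnt
  have hwpos : (0:ℝ) < ‖w‖ := norm_pos_iff.mpr hw0
  obtain ⟨θ, hθ⟩ : ∃ θ : C, 1 < ‖θ‖ := by
    rcases lt_or_gt_of_ne hw1 with h | h
    · exact ⟨(φ w)⁻¹, by rw [norm_inv, hext]; exact (one_lt_inv₀ hwpos).mpr h⟩
    · exact ⟨φ w, by rw [hext]; exact h⟩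
  refine le_of_forall_lt fun t ht => ?_
  rcases lt_or_ge t 0 with htneg | htnn
  · exact htneg.trans_le ((norm_nonneg _).trans (le_csSup hbdd hmem0))
  -- 0 ≤ t < ‖b‖ * r
  set u : ℝ := max t (‖b‖ * r / 2) with hu
  have hu0 : 0 < u := lt_max_of_lt_right (by positivity)
  have hur : u < ‖b‖ * r := max_lt ht (by linarith)
  have htu : t ≤ u := le_max_left _ _
  have hudiv : u / ‖b‖ < r := (div_lt_iff₀ hb0).mpr (by rw [mul_comm]; exact hur)
  have hudiv0 : 0 < u / ‖b‖ := div_pos hu0 hb0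
  obtain ⟨c₁, hc₁l, hc₁r⟩ := dense_norms hθ hudiv0 hudiv
  -- get c with u/‖b‖ < ‖c‖ < r and ‖φ b * c‖ ≠ ‖φ a - φ b * φ x‖
  obtain ⟨c, hcl, hcr, hcne⟩ :
      ∃ c : C, u / ‖b‖ < ‖c‖ ∧ ‖c‖ < r ∧ ‖φ b * c‖ ≠ ‖φ a - φ b * φ x‖ := by
    by_cases hcase : ‖φ b * c₁‖ = ‖φ a - φ b * φ x‖
    · obtain ⟨c₂, hc₂l, hc₂r⟩ := dense_norms hθ (hudiv0.trans hc₁l) hc₁r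
      refine ⟨c₂, hc₁l.trans hc₂l, hc₂r, ?_⟩
      rw [← hcase]
      have : ‖φ b * c₁‖ < ‖φ b * c₂‖ := by
        rw [norm_mul, norm_mul, hext]
        exact mul_lt_mul_of_pos_left hc₂l hb0
      exact this.ne'
    · exact ⟨c₁, hc₁l, hc₁r, hcase⟩
  set y : C := φ x + c with hy
  have hymem : y ∈ Metric.closedBall (φ x) r := by
    rw [Metric.mem_closedBall, dist_eq_norm]
    simpa [hy] using hcr.le
  have hd : ‖φ a - φ b * y‖ ∈ S := ⟨y, hymem, rfl⟩
  have heq : φ a - φ b * y = (φ a - φ b * φ x) - φ b * c := by rw [hy]; ring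
  have hnorm : ‖φ a - φ b * y‖ = max ‖φ a - φ b * φ x‖ ‖φ b * c‖ := by
    rw [heq, ultra_sub_eq (Ne.symm hcne)]
  have : t < ‖φ a - φ b * y‖ := by
    rw [hnorm]
    refine lt_max_of_lt_right ?_
    rw [norm_mul, hext]
    calc t ≤ u := htu
      _ = ‖b‖ * (u / ‖b‖) := by field_simp
      _ < ‖b‖ * ‖c‖ := mul_lt_mul_of_pos_left hcl hb0
  exact this.trans_le (le_csSup hbdd hd)
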